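/- Symmetrizability of the Maxwell–Stefan matrix: for every ρ ∈ ℝ^{N+1} with ρ_i > 0 for all i, setting R = diag(ρ_1^{1/2}, …, ρ_{N+1}^{1/2}), the matrix R^{-1} M(ρ) R is symmetric (its (i,j) entry equals ρ_i^{1/2} ρ_j^{1/2}/D_{ij} for i ≠ j). Consequently, all eigenvalues of M(ρ) are real. -/

import Mathlib

open Finset Matrix

/-- The Maxwell–Stefan matrix `M(ρ)`, with entries `M_{ij} = ρ_i/D_{ij}` for `i ≠ j` and
`M_{ii} = -Σ_{k ≠ i} ρ_k/D_{ik}`. -/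
noncomputable def msM (N : ℕ) (D : Fin (N + 1) → Fin (N + 1) → ℝ) (ρ : Fin (N + 1) → ℝ) :
    Matrix (Fin (N + 1)) (Fin (N + 1)) ℝ :=
  Matrix.of fun i j =>
    if i = j then -∑ k ∈ Finset.univ.erase i, ρ k / D i k else ρ i / D i j

set_option maxHeartbeats 1000000 in
/-- Symmetrizability of the Maxwell–Stefan matrix: with `R = diag(√ρ_1, …, √ρ_{N+1})`,
the matrix `R⁻¹ M(ρ) R` is symmetric, with off-diagonal entries `√ρ_i √ρ_j / D_{ij}`;
consequently all eigenvalues of `M(ρ)` are real. -/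
theorem stmt8 (N : ℕ) (hN : 1 ≤ N) (D : Fin (N + 1) → Fin (N + 1) → ℝ)
    (hDpos : ∀ i j, i ≠ j → 0 < D i j) (hDsymm : ∀ i j, D i j = D j i)
    (ρ : Fin (N + 1) → ℝ) (hρ : ∀ i, 0 < ρ i) :
    ((Matrix.diagonal fun i => Real.sqrt (ρ i))⁻¹ * msM N D ρ
        * Matrix.diagonal fun i => Real.sqrt (ρ i)).IsSymm ∧
    (∀ i j, i ≠ j →
      ((Matrix.diagonal fun i => Real.sqrt (ρ i))⁻¹ * msM N D ρ
          * Matrix.diagonal fun i => Real.sqrt (ρ i)) i j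
        = Real.sqrt (ρ i) * Real.sqrt (ρ j) / D i j) ∧
    (∀ μ ∈ spectrum ℂ ((msM N D ρ).map (Complex.ofReal : ℝ → ℂ)), μ.im = 0) := by
  have hs : ∀ i, Real.sqrt (ρ i) ≠ 0 := fun i =>
    ne_of_gt (Real.sqrt_pos.mpr (hρ i))
  set M := msM N D ρ with hM
  set S := (Matrix.diagonal fun i => Real.sqrt (ρ i))⁻¹ * M
      * Matrix.diagonal fun i => Real.sqrt (ρ i) with hS
  -- entry formula for S
  have hinv : Ring.inverse (fun i => Real.sqrt (ρ i)) = fun i => (Real.sqrt (ρ i))⁻¹ := by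
    let w : (Fin (N + 1) → ℝ)ˣ :=
      ⟨fun i => Real.sqrt (ρ i), fun i => (Real.sqrt (ρ i))⁻¹,
        funext fun i => mul_inv_cancel₀ (hs i), funext fun i => inv_mul_cancel₀ (hs i)⟩
    exact Ring.inverse_unit w
  have hSentry : ∀ i j, S i j = (Real.sqrt (ρ i))⁻¹ * M i j * Real.sqrt (ρ j) := by
    intro i j
    rw [hS, Matrix.inv_diagonal, hinv, Matrix.mul_apply]
    simp [Matrix.mul_apply, Matrix.diagonal_apply, Finset.sum_ite_eq, Finset.sum_ite_eq']
  have hoff : ∀ i j, i ≠ j → S i j = Real.sqrt (ρ i) * Real.sqrt (ρ j) / D i j := by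
    intro i j hij
    rw [hSentry i j]
    have hMij : M i j = ρ i / D i j := by simp [hM, msM, hij]
    rw [hMij]
    rw [← Real.mul_self_sqrt (le_of_lt (hρ i))]
    field_simp
    rw [Real.sqrt_sq (Real.sqrt_nonneg _),
      div_eq_div_iff (mul_ne_zero (hs i) (hDpos i j hij).ne') (hDpos i j hij).ne']
    ring
  have hsymm : S.IsSymm := by
    rw [Matrix.IsSymm]
    ext i j
    rw [Matrix.transpose_apply]
    by_cases hij : i = j
    · rw [hij]
    · rw [hoff j i (Ne.symm hij), hoff i j hij, hDsymm]
      ring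
  refine ⟨hsymm, hoff, ?_⟩
  -- spectrum part
  intro μ hμ
  set Rc : Matrix (Fin (N + 1)) (Fin (N + 1)) ℂ :=
    Matrix.diagonal fun i => (Real.sqrt (ρ i) : ℂ) with hRc
  have hRcdet : IsUnit Rc.det := by
    rw [hRc, Matrix.det_diagonal, isUnit_iff_ne_zero]
    exact Finset.prod_ne_zero_iff.mpr fun i _ => by
      exact_mod_cast Complex.ofReal_ne_zero.mpr (hs i)
  have hRcU : IsUnit Rc := (Matrix.isUnit_iff_isUnit_det Rc).mpr hRcdet
  obtain ⟨u, hu⟩ := hRcU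
  set Sc := S.map (Complex.ofReal : ℝ → ℂ) with hSc
  have hdiag : ∀ i, S i i = M i i := by
    intro i
    rw [hSentry, mul_comm ((Real.sqrt (ρ i))⁻¹) (M i i), mul_assoc,
      inv_mul_cancel₀ (hs i), mul_one]
  -- key identity : Rc * Sc = (M.map ofReal) * Rc
  have hkey : Rc * Sc = (M.map (Complex.ofReal : ℝ → ℂ)) * Rc := by
    ext i j
    rw [Matrix.diagonal_mul, Matrix.mul_diagonal]
    by_cases hij : i = j
    · subst hij
      rw [hSc, Matrix.map_apply, hdiag i, Matrix.map_apply]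
      ring
    · rw [hSc, Matrix.map_apply, hoff i j hij, Matrix.map_apply]
      have hMij : M i j = ρ i / D i j := by simp [hM, msM, hij]
      rw [hMij]
      push_cast
      have : (ρ i : ℂ) = (Real.sqrt (ρ i) : ℂ) * (Real.sqrt (ρ i) : ℂ) := by
        exact_mod_cast congrArg Complex.ofReal
          (Real.mul_self_sqrt (le_of_lt (hρ i))).symm
      rw [this]
      ring
  have hconj : M.map (Complex.ofReal : ℝ → ℂ) =
      (u : Matrix (Fin (N + 1)) (Fin (N + 1)) ℂ) * Sc * (↑(u⁻¹) : Matrix (Fin (N + 1)) (Fin (N + 1)) ℂ) := by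
    have h2 : (M.map (Complex.ofReal : ℝ → ℂ)) *
        ((u : Matrix (Fin (N + 1)) (Fin (N + 1)) ℂ) * (↑(u⁻¹) : Matrix (Fin (N + 1)) (Fin (N + 1)) ℂ))
        = (u : Matrix (Fin (N + 1)) (Fin (N + 1)) ℂ) * Sc * (↑(u⁻¹) : Matrix (Fin (N + 1)) (Fin (N + 1)) ℂ) := by
      rw [← mul_assoc, hu, ← hkey, mul_assoc, ← hu]
    rw [Units.mul_inv, mul_one] at h2
    exact h2
  have hspec : spectrum ℂ (M.map (Complex.ofReal : ℝ → ℂ)) = spectrum ℂ Sc := by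
    rw [hconj]
    exact spectrum.units_conjugate
  rw [hspec] at hμ
  have hH : Sc.IsHermitian := by
    show Scᴴ = Sc
    ext i j
    rw [Matrix.conjTranspose_apply, hSc, Matrix.map_apply, Matrix.map_apply,
      Complex.star_def, Complex.conj_ofReal, hsymm.apply]
  rw [hH.spectral_theorem, Unitary.conjStarAlgAut_apply, Unitary.spectrum_star_right_conjugate, spectrum_diagonal] at hμ
  obtain ⟨i, hi⟩ := hμ
  rw [← hi]
  simp
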